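/- Let H be a non-symmetric 4×4 complex Hadamard matrix in dephased form, and let ρ ∈ ℂ be non-real with |ρ| = 1 such that ρ/2 is an entry of H. Then either tr(H) = (−1 + ρ)/2 and the characteristic polynomial of H equals (X − 1)·(X + 1)·(X² + ((1 − ρ)/2)·X − ρ), or tr(H) = (−1 − ρ)/2 and the characteristic polynomial of H equals (X − 1)·(X + 1)·(X² + ((1 + ρ)/2)·X + ρ). -/

import Mathlib

open Matrix Polynomial Complex

set_option maxHeartbeats 1000000

lemma my_det_fin_four {R : Type*} [CommRing R] (A : Matrix (Fin 4) (Fin 4) R) :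
    A.det =
      A 0 0 * (A 1 1 * (A 2 2 * A 3 3 - A 2 3 * A 3 2) - A 1 2 * (A 2 1 * A 3 3 - A 2 3 * A 3 1)
        + A 1 3 * (A 2 1 * A 3 2 - A 2 2 * A 3 1))
      - A 0 1 * (A 1 0 * (A 2 2 * A 3 3 - A 2 3 * A 3 2) - A 1 2 * (A 2 0 * A 3 3 - A 2 3 * A 3 0)
        + A 1 3 * (A 2 0 * A 3 2 - A 2 2 * A 3 0))
      + A 0 2 * (A 1 0 * (A 2 1 * A 3 3 - A 2 3 * A 3 1) - A 1 1 * (A 2 0 * A 3 3 - A 2 3 * A 3 0)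
        + A 1 3 * (A 2 0 * A 3 1 - A 2 1 * A 3 0))
      - A 0 3 * (A 1 0 * (A 2 1 * A 3 2 - A 2 2 * A 3 1) - A 1 1 * (A 2 0 * A 3 2 - A 2 2 * A 3 0)
        + A 1 2 * (A 2 0 * A 3 1 - A 2 1 * A 3 0)) := by
  rw [Matrix.det_succ_row_zero, Fin.sum_univ_four]
  norm_num [Matrix.det_fin_three, Fin.sum_univ_four, Matrix.submatrix_apply, Fin.succAbove,
    Fin.lt_def, show (Fin.succ 2 : Fin 4) = 3 from rfl, show (Fin.castSucc 2 : Fin 4) = 2 from rfl,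
    show (((3:Fin 4):ℕ)) = 3 from rfl, show (((2:Fin 4):ℕ)) = 2 from rfl,
    show (((1:Fin 4):ℕ)) = 1 from rfl]
  ring

lemma charpoly_formula (M : Matrix (Fin 4) (Fin 4) ℂ) (p : ℂ[X])
    (h : ∀ r : ℂ,
      (r - M 0 0) * ((r - M 1 1) * ((r - M 2 2) * (r - M 3 3) - (-(M 2 3)) * (-(M 3 2)))
          - (-(M 1 2)) * ((-(M 2 1)) * (r - M 3 3) - (-(M 2 3)) * (-(M 3 1)))
          + (-(M 1 3)) * ((-(M 2 1)) * (-(M 3 2)) - (r - M 2 2) * (-(M 3 1))))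
      - (-(M 0 1)) * ((-(M 1 0)) * ((r - M 2 2) * (r - M 3 3) - (-(M 2 3)) * (-(M 3 2)))
          - (-(M 1 2)) * ((-(M 2 0)) * (r - M 3 3) - (-(M 2 3)) * (-(M 3 0)))
          + (-(M 1 3)) * ((-(M 2 0)) * (-(M 3 2)) - (r - M 2 2) * (-(M 3 0))))
      + (-(M 0 2)) * ((-(M 1 0)) * ((-(M 2 1)) * (r - M 3 3) - (-(M 2 3)) * (-(M 3 1)))
          - (r - M 1 1) * ((-(M 2 0)) * (r - M 3 3) - (-(M 2 3)) * (-(M 3 0)))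
          + (-(M 1 3)) * ((-(M 2 0)) * (-(M 3 1)) - (-(M 2 1)) * (-(M 3 0))))
      - (-(M 0 3)) * ((-(M 1 0)) * ((-(M 2 1)) * (-(M 3 2)) - (r - M 2 2) * (-(M 3 1)))
          - (r - M 1 1) * ((-(M 2 0)) * (-(M 3 2)) - (r - M 2 2) * (-(M 3 0)))
          + (-(M 1 2)) * ((-(M 2 0)) * (-(M 3 1)) - (-(M 2 1)) * (-(M 3 0))))
      = eval r p) :
    M.charpoly = p := by
  apply Polynomial.funext
  intro r
  rw [Matrix.charpoly,
    show eval r M.charmatrix.det = (evalRingHom r) M.charmatrix.det from rfl,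
    RingHom.map_det, RingHom.mapMatrix_apply, my_det_fin_four]
  have hd : ∀ i, (M.charmatrix.map (⇑(evalRingHom r))) i i = r - M i i := by
    intro i; simp [Matrix.map_apply, charmatrix_apply_eq]
  have ho : ∀ i j, i ≠ j → (M.charmatrix.map (⇑(evalRingHom r))) i j = -(M i j) := by
    intro i j hij; simp [Matrix.map_apply, charmatrix_apply_ne _ _ _ hij]
  rw [hd 0, hd 1, hd 2, hd 3, ho 0 1 (by decide), ho 0 2 (by decide), ho 0 3 (by decide),
    ho 1 0 (by decide), ho 1 2 (by decide), ho 1 3 (by decide), ho 2 0 (by decide),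
    ho 2 1 (by decide), ho 2 3 (by decide), ho 3 0 (by decide), ho 3 1 (by decide),
    ho 3 2 (by decide)]
  exact h r

lemma my_trace (M : Matrix (Fin 4) (Fin 4) ℂ) : M.trace = M 0 0 + M 1 1 + M 2 2 + M 3 3 := by
  simp [Matrix.trace, Matrix.diag, Fin.sum_univ_four]

/-- A 4×4 complex Hadamard matrix: unitary with all entries of absolute value `1/√4`. -/
def IsHadamard (H : Matrix (Fin 4) (Fin 4) ℂ) : Prop :=
  H * Hᴴ = 1 ∧ Hᴴ * H = 1 ∧ ∀ i j, ‖H i j‖ = 1 / Real.sqrt 4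

/-- Dephased form: all entries of the 0th row and 0th column equal `1/√4`. -/
def IsDephased (H : Matrix (Fin 4) (Fin 4) ℂ) : Prop :=
  (∀ j, H 0 j = ((1 / Real.sqrt 4 : ℝ) : ℂ)) ∧ (∀ i, H i 0 = ((1 / Real.sqrt 4 : ℝ) : ℂ))


lemma conj_one {x x' : ℂ} (ux : x * x' = 1) (h : x = 1) : x' = 1 := by
  subst h; linear_combination ux

lemma conj_negone {x x' : ℂ} (ux : x * x' = 1) (h : x = -1) : x' = -1 := by
  subst h; linear_combination -ux

lemma conj_negpair {x x' y y' : ℂ} (ux : x * x' = 1) (uy : y * y' = 1) (h : x = -y) :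
    x' = -y' := by
  linear_combination x'*y'*h - x'*uy - y'*ux

lemma unconj {x x' : ℂ} (ux : x * x' = 1) (h : x' = 1) : x = 1 := by
  linear_combination ux - x*h

lemma unconj_neg {x x' : ℂ} (ux : x * x' = 1) (h : x' = -1) : x = -1 := by
  linear_combination x*h - ux

lemma tri {a b c a' b' c' : ℂ} (ua : a * a' = 1) (ub : b * b' = 1) (uc : c * c' = 1)
    (hs : 1 + a + b + c = 0) (hs' : 1 + a' + b' + c' = 0) :
    a = -1 ∨ b = -1 ∨ c = -1 := by
  have key : (a + 1) * ((b + 1) * (c + 1)) = 0 := by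
    linear_combination a*b*c*hs' + hs - b*c*ua - a*c*ub - a*b*uc
  rcases mul_eq_zero.mp key with h | h
  · exact Or.inl (by linear_combination h)
  · rcases mul_eq_zero.mp h with h | h
    · exact Or.inr (Or.inl (by linear_combination h))
    · exact Or.inr (Or.inr (by linear_combination h))

lemma pair {x x' y y' : ℂ} (ux : x * x' = 1) (uy : y * y' = 1)
    (h : x + y = -2) (h' : x' + y' = -2) : x = -1 ∧ y = -1 := by
  have key : (x + 1) * (x' + 1) = 0 := by
    linear_combination (1/2)*ux + (1/2)*uy + ((x'+2)/2)*h - (y/2)*h'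
  have hx : x = -1 := by
    rcases mul_eq_zero.mp key with h0 | h0
    · linear_combination h0
    · linear_combination x*h0 - ux
  exact ⟨hx, by linear_combination h - hx⟩

lemma core_classify (a b c d e f g p q a' b' c' d' e' f' g' p' q' : ℂ)
    (ua : a*a' = 1) (ub : b*b' = 1) (uc : c*c' = 1) (ud : d*d' = 1) (ue : e*e' = 1)
    (uf : f*f' = 1) (ug : g*g' = 1) (up : p*p' = 1) (uq : q*q' = 1)
    (r1 : 1 + a + b + c = 0) (r2 : 1 + d + e + f = 0) (r3 : 1 + g + p + q = 0)
    (c1 : 1 + a + d + g = 0) (c2 : 1 + b + e + p = 0) (c3 : 1 + c + f + q = 0)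
    (r1' : 1 + a' + b' + c' = 0) (r2' : 1 + d' + e' + f' = 0) (r3' : 1 + g' + p' + q' = 0)
    (c1' : 1 + a' + d' + g' = 0) (c2' : 1 + b' + e' + p' = 0) (c3' : 1 + c' + f' + q' = 0)
    (o12 : 1 + a*d' + b*e' + c*f' = 0) :
    (a = -1 ∧ c = -b ∧ d = -1 ∧ e = -b ∧ f = b ∧ g = 1 ∧ p = -1 ∧ q = -1) ∨
    (a = -1 ∧ b = 1 ∧ c = -1 ∧ e = -1 ∧ f = -d ∧ g = -d ∧ p = -1 ∧ q = d) ∨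
    (a = -1 ∧ c = -b ∧ d = 1 ∧ e = -1 ∧ f = -1 ∧ g = -1 ∧ p = -b ∧ q = b) ∨
    (a = -1 ∧ b = -1 ∧ c = 1 ∧ e = -d ∧ f = -1 ∧ g = -d ∧ p = d ∧ q = -1) ∨
    (a = 1 ∧ b = -1 ∧ c = -1 ∧ d = -1 ∧ f = -e ∧ g = -1 ∧ p = -e ∧ q = e) ∨
    (b = -1 ∧ c = -a ∧ d = -1 ∧ e = 1 ∧ f = -1 ∧ g = -a ∧ p = -1 ∧ q = a) ∨
    (b = -1 ∧ c = -a ∧ d = -a ∧ e = -1 ∧ f = a ∧ g = -1 ∧ p = 1 ∧ q = -1) ∨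
    (b = -a ∧ c = -1 ∧ d = -1 ∧ e = -1 ∧ f = 1 ∧ g = -a ∧ p = a ∧ q = -1) ∨
    (a = 1 ∧ b = -1 ∧ c = -1 ∧ d = -1 ∧ e = -f ∧ g = -1 ∧ p = f ∧ q = -f) ∨
    (b = -a ∧ c = -1 ∧ d = -a ∧ e = a ∧ f = -1 ∧ g = -1 ∧ p = -1 ∧ q = 1) := by
  rcases tri ua ub uc r1 r1' with h1 | h1 | h1
  · -- a = -1
    have hc : c = -b := by linear_combination r1 - h1
    rcases tri ua ud ug c1 c1' with h2 | h2 | h2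
    · -- nothing new (a = -1); g = -d from c1
      have hg : g = -d := by linear_combination c1 - h1
      rcases tri ud ue uf r2 r2' with h3 | h3 | h3
      · -- d = -1 : component 1
        have hg1 : g = 1 := by linear_combination c1 - h1 - h3
        have hg1' : g' = 1 := conj_one ug hg1
        have hpq : p + q = -2 := by linear_combination r3 - hg1
        have hpq' : p' + q' = -2 := by linear_combination r3' - hg1'
        obtain ⟨hp, hq⟩ := pair up uq hpq hpq'
        have he : e = -b := by linear_combination c2 - hp
        have hf : f = b := by linear_combination r2 - h3 - he
        exact Or.inl ⟨h1, hc, h3, he, hf, hg1, hp, hq⟩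
      · -- e = -1 (A-i-b)
        have hf : f = -d := by linear_combination r2 - h3
        have hp2 : p = -b := by linear_combination c2 - h3
        have hq2 : q = b + d - 1 := by linear_combination c3 - hc - hf
        have he' : e' = -1 := conj_negone ue h3
        have hf' : f' = -d' := conj_negpair uf ud hf
        have key : (b - 1) * (d' - 1) = 0 := by
          linear_combination o12 - d'*h1 - b*he' - f'*hc + b*hf'
        rcases mul_eq_zero.mp key with hb1 | hd1
        · have hb : b = 1 := by linear_combination hb1
          have hcc : c = -1 := by linear_combination hc - hb
          have hpp : p = -1 := by linear_combination hp2 - hb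
          have hqq : q = d := by linear_combination hq2 + hb
          exact Or.inr (Or.inl ⟨h1, hb, hcc, h3, hf, hg, hpp, hqq⟩)
        · have hd : d = 1 := by linear_combination ud - d*hd1
          have hff : f = -1 := by linear_combination hf - hd
          have hgg : g = -1 := by linear_combination hg - hd
          have hqq : q = b := by linear_combination hq2 + hd
          exact Or.inr (Or.inr (Or.inl ⟨h1, hc, hd, h3, hff, hgg, hp2, hqq⟩))
      · -- f = -1 (A-i-c)
        have he : e = -d := by linear_combination r2 - h3
        have hq : q = b := by linear_combination c3 - hc - h3
        have hp : p = d - b - 1 := by linear_combination c2 - he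
        have he' : e' = -d' := conj_negpair ue ud he
        have hf' : f' = -1 := conj_negone uf h3
        have key : (b + 1) * (d' - 1) = 0 := by
          linear_combination -o12 + d'*h1 + b*he' + c*hf' - hc
        rcases mul_eq_zero.mp key with hb1 | hd1
        · have hb : b = -1 := by linear_combination hb1
          have hcc : c = 1 := by linear_combination hc - hb
          have hpp : p = d := by linear_combination hp - hb
          have hqq : q = -1 := by linear_combination hq + hb
          exact Or.inr (Or.inr (Or.inr (Or.inl ⟨h1, hb, hcc, he, h3, hg, hpp, hqq⟩)))
        · have hd : d = 1 := by linear_combination ud - d*hd1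
          have hee : e = -1 := by linear_combination he - hd
          have hgg : g = -1 := by linear_combination hg - hd
          have hpp : p = -b := by linear_combination hp + hd
          exact Or.inr (Or.inr (Or.inl ⟨h1, hc, hd, hee, h3, hgg, hpp, hq⟩))
    · -- d = -1 (A-ii) : component 1
      have hg1 : g = 1 := by linear_combination c1 - h1 - h2
      have hg1' : g' = 1 := conj_one ug hg1
      have hpq : p + q = -2 := by linear_combination r3 - hg1
      have hpq' : p' + q' = -2 := by linear_combination r3' - hg1'
      obtain ⟨hp, hq⟩ := pair up uq hpq hpq'
      have he : e = -b := by linear_combination c2 - hp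
      have hf : f = b := by linear_combination r2 - h2 - he
      exact Or.inl ⟨h1, hc, h2, he, hf, hg1, hp, hq⟩
    · -- g = -1 (A-iii) : component 3
      have hd : d = 1 := by linear_combination c1 - h1 - h2
      have hd' : d' = 1 := conj_one ud hd
      have hef : e + f = -2 := by linear_combination r2 - hd
      have hef' : e' + f' = -2 := by linear_combination r2' - hd'
      obtain ⟨he, hf⟩ := pair ue uf hef hef'
      have hp : p = -b := by linear_combination c2 - he
      have hq : q = b := by linear_combination c3 - hc - hf
      exact Or.inr (Or.inr (Or.inl ⟨h1, hc, hd, he, hf, h2, hp, hq⟩))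
  · -- b = -1
    have hc : c = -a := by linear_combination r1 - h1
    rcases tri ua ud ug c1 c1' with h2 | h2 | h2
    · -- a = -1 : component 4
      have hcc : c = 1 := by linear_combination hc - h2
      have hc1' : c' = 1 := conj_one uc hcc
      have hg : g = -d := by linear_combination c1 - h2
      have hfq : f + q = -2 := by linear_combination c3 - hcc
      have hfq' : f' + q' = -2 := by linear_combination c3' - hc1'
      obtain ⟨hf, hq⟩ := pair uf uq hfq hfq'
      have he : e = -d := by linear_combination r2 - hf
      have hp : p = d := by linear_combination c2 - h1 - he
      exact Or.inr (Or.inr (Or.inr (Or.inl ⟨h2, h1, hcc, he, hf, hg, hp, hq⟩)))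
    · -- d = -1 (B-ii)
      have hg : g = -a := by linear_combination c1 - h2
      have hf : f = -e := by linear_combination r2 - h2
      have hp : p = -e := by linear_combination c2 - h1
      have hq : q = a - 1 + e := by linear_combination c3 - hc - hf
      have hd' : d' = -1 := conj_negone ud h2
      have hf' : f' = -e' := conj_negpair uf ue hf
      have key : (a - 1) * (e' - 1) = 0 := by
        linear_combination o12 - a*hd' - e'*h1 - f'*hc + a*hf'
      rcases mul_eq_zero.mp key with ha1 | he1
      · have ha : a = 1 := by linear_combination ha1
        have hcc : c = -1 := by linear_combination hc - ha
        have hgg : g = -1 := by linear_combination hg - ha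
        have hqq : q = e := by linear_combination hq + ha
        exact Or.inr (Or.inr (Or.inr (Or.inr (Or.inl ⟨ha, h1, hcc, h2, hf, hgg, hp, hqq⟩))))
      · have he : e = 1 := by linear_combination ue - e*he1
        have hff : f = -1 := by linear_combination hf - he
        have hpp : p = -1 := by linear_combination hp - he
        have hqq : q = a := by linear_combination hq + he
        exact Or.inr (Or.inr (Or.inr (Or.inr (Or.inr (Or.inl ⟨h1, hc, h2, he, hff, hg, hpp, hqq⟩)))))
    · -- g = -1 (B-iii)
      have hd : d = -a := by linear_combination c1 - h2
      have hp : p = -e := by linear_combination c2 - h1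
      have hq : q = e := by linear_combination r3 - h2 - hp
      have hd' : d' = -a' := conj_negpair ud ua hd
      have he'f : e' = -(a * f') := by
        linear_combination -o12 + a*hd' - ua + e'*h1 + f'*hc
      have hf : f = -(a * e) := by
        linear_combination e*f*he'f - f*ue - a*e*uf
      have key : (a - 1) * (e + 1) = 0 := by
        linear_combination -r2 + hd + hf
      rcases mul_eq_zero.mp key with ha1 | he1
      · have ha : a = 1 := by linear_combination ha1
        have hcc : c = -1 := by linear_combination hc - ha
        have hdd : d = -1 := by linear_combination hd - ha
        have hff : f = -e := by linear_combination hf - e*ha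
        exact Or.inr (Or.inr (Or.inr (Or.inr (Or.inl ⟨ha, h1, hcc, hdd, hff, h2, hp, hq⟩))))
      · have he : e = -1 := by linear_combination he1
        have hff : f = a := by linear_combination hf - a*he1
        have hpp : p = 1 := by linear_combination hp - he1
        have hqq : q = -1 := by linear_combination hq + he1
        exact Or.inr (Or.inr (Or.inr (Or.inr (Or.inr (Or.inr (Or.inl ⟨h1, hc, hd, he, hff, h2, hpp, hqq⟩))))))
  · -- c = -1
    have hb : b = -a := by linear_combination r1 - h1
    rcases tri ua ud ug c1 c1' with h2 | h2 | h2
    · -- a = -1 : component 2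
      have hbb : b = 1 := by linear_combination hb - h2
      have hb' : b' = 1 := conj_one ub hbb
      have hg : g = -d := by linear_combination c1 - h2
      have hep : e + p = -2 := by linear_combination c2 - hbb
      have hep' : e' + p' = -2 := by linear_combination c2' - hb'
      obtain ⟨he, hp⟩ := pair ue up hep hep'
      have hf : f = -d := by linear_combination r2 - he
      have hq : q = d := by linear_combination c3 - h1 - hf
      exact Or.inr (Or.inl ⟨h2, hbb, h1, he, hf, hg, hp, hq⟩)
    · -- d = -1 (C-ii)
      have hg : g = -a := by linear_combination c1 - h2
      have hf : f = -e := by linear_combination r2 - h2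
      have hq : q = e := by linear_combination c3 - h1 - hf
      have hp : p = a - 1 - e := by linear_combination c2 - hb
      have hd' : d' = -1 := conj_negone ud h2
      have hf' : f' = -e' := conj_negpair uf ue hf
      have key : (a - 1) * (e' + 1) = 0 := by
        linear_combination -o12 + a*hd' + e'*hb + f'*h1 - hf'
      rcases mul_eq_zero.mp key with ha1 | he1
      · have ha : a = 1 := by linear_combination ha1
        have hbb : b = -1 := by linear_combination hb - ha
        have hgg : g = -1 := by linear_combination hg - ha
        have hpp : p = -e := by linear_combination hp + ha
        exact Or.inr (Or.inr (Or.inr (Or.inr (Or.inl ⟨ha, hbb, h1, h2, hf, hgg, hpp, hq⟩))))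
      · have hee : e = -1 := by linear_combination e*he1 - ue
        have hff : f = 1 := by linear_combination hf - hee
        have hpp : p = a := by linear_combination hp - hee
        have hqq : q = -1 := by linear_combination hq + hee
        exact Or.inr (Or.inr (Or.inr (Or.inr (Or.inr (Or.inr (Or.inr (Or.inl ⟨hb, h1, h2, hee, hff, hg, hpp, hqq⟩)))))))
    · -- g = -1 (C-iii)
      have hd : d = -a := by linear_combination c1 - h2
      have hq : q = -p := by linear_combination r3 - h2
      have hp : p = f := by linear_combination -c3 + h1 + hq
      have he : e = a - 1 - f := by linear_combination c2 - hb - hp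
      have hd' : d' = -a' := conj_negpair ud ua hd
      have key0 : a * e' = -f' := by
        linear_combination -o12 + a*hd' + e'*hb + f'*h1 - ua
      have hee : e = -(a * f) := by
        linear_combination e*f*key0 - a*f*ue - e*uf
      have key : (a - 1) * (f + 1) = 0 := by
        linear_combination -he + hee
      rcases mul_eq_zero.mp key with ha1 | hf1
      · have ha : a = 1 := by linear_combination ha1
        have hbb : b = -1 := by linear_combination hb - ha
        have hdd : d = -1 := by linear_combination hd - ha
        have hef : e = -f := by linear_combination hee - f*ha1
        have hqq : q = -f := by linear_combination hq - hp
        exact Or.inr (Or.inr (Or.inr (Or.inr (Or.inr (Or.inr (Or.inr (Or.inr (Or.inl ⟨ha, hbb, h1, hdd, hef, h2, hp, hqq⟩))))))))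
      · have hf : f = -1 := by linear_combination hf1
        have hee2 : e = a := by linear_combination hee - a*hf1
        have hpp : p = -1 := by linear_combination hp + hf
        have hqq : q = 1 := by linear_combination hq - hpp
        exact Or.inr (Or.inr (Or.inr (Or.inr (Or.inr (Or.inr (Or.inr (Or.inr (Or.inr ⟨hb, h1, hd, hee2, hf, h2, hpp, hqq⟩))))))))

lemma leafC1 (M : Matrix (Fin 4) (Fin 4) ℂ) (u ρ : ℂ) (hρ : ρ.im ≠ 0)
    (hent : ∃ i j, M i j = ρ / 2)
    (e00 : M 0 0 = 1/2) (e01 : M 0 1 = 1/2) (e02 : M 0 2 = 1/2) (e03 : M 0 3 = 1/2)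
    (e10 : M 1 0 = 1/2) (e11 : M 1 1 = -(1/2)) (e12 : M 1 2 = u/2) (e13 : M 1 3 = -(u/2))
    (e20 : M 2 0 = 1/2) (e21 : M 2 1 = -(1/2)) (e22 : M 2 2 = -(u/2)) (e23 : M 2 3 = u/2)
    (e30 : M 3 0 = 1/2) (e31 : M 3 1 = 1/2) (e32 : M 3 2 = -(1/2)) (e33 : M 3 3 = -(1/2))
    :
    (M.trace = (-1 + ρ) / 2 ∧
      M.charpoly = (X - 1) * (X + 1) * (X ^ 2 + C ((1 - ρ) / 2) * X - C ρ)) ∨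
    (M.trace = (-1 - ρ) / 2 ∧
      M.charpoly = (X - 1) * (X + 1) * (X ^ 2 + C ((1 + ρ) / 2) * X + C ρ)) := by
  have hu : u = ρ ∨ u = -ρ := by
    obtain ⟨i, j, hij⟩ := hent
    fin_cases i <;> fin_cases j <;>
      simp only [Fin.zero_eta, Fin.mk_one, Fin.reduceFinMk, e00, e01, e02, e03, e10, e11, e12, e13, e20, e21, e22, e23, e30, e31, e32, e33] at hij <;>
      first
        | exact absurd (show ρ.im = 0 from by
            rw [show ρ = 1 from by linear_combination -2*hij]; norm_num) hρ
        | exact absurd (show ρ.im = 0 from by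
            rw [show ρ = -1 from by linear_combination -2*hij]; norm_num) hρ
        | exact Or.inl (by linear_combination 2*hij)
        | exact Or.inr (by linear_combination -2*hij)
  rcases hu with hu | hu <;> subst hu
  · refine Or.inr ⟨?_, ?_⟩
    · rw [my_trace, e00, e11, e22, e33]; ring
    · apply charpoly_formula
      intro r
      rw [e00, e01, e02, e03, e10, e11, e12, e13, e20, e21, e22, e23, e30, e31, e32, e33]
      simp only [eval_mul, eval_add, eval_sub, eval_pow, eval_X, eval_C, eval_one]
      ring
  · refine Or.inl ⟨?_, ?_⟩
    · rw [my_trace, e00, e11, e22, e33]; ring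
    · apply charpoly_formula
      intro r
      rw [e00, e01, e02, e03, e10, e11, e12, e13, e20, e21, e22, e23, e30, e31, e32, e33]
      simp only [eval_mul, eval_add, eval_sub, eval_pow, eval_X, eval_C, eval_one]
      ring

lemma leafC2 (M : Matrix (Fin 4) (Fin 4) ℂ) (u ρ : ℂ) (hρ : ρ.im ≠ 0)
    (hent : ∃ i j, M i j = ρ / 2)
    (e00 : M 0 0 = 1/2) (e01 : M 0 1 = 1/2) (e02 : M 0 2 = 1/2) (e03 : M 0 3 = 1/2)
    (e10 : M 1 0 = 1/2) (e11 : M 1 1 = -(1/2)) (e12 : M 1 2 = 1/2) (e13 : M 1 3 = -(1/2))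
    (e20 : M 2 0 = 1/2) (e21 : M 2 1 = u/2) (e22 : M 2 2 = -(1/2)) (e23 : M 2 3 = -(u/2))
    (e30 : M 3 0 = 1/2) (e31 : M 3 1 = -(u/2)) (e32 : M 3 2 = -(1/2)) (e33 : M 3 3 = u/2)
    :
    (M.trace = (-1 + ρ) / 2 ∧
      M.charpoly = (X - 1) * (X + 1) * (X ^ 2 + C ((1 - ρ) / 2) * X - C ρ)) ∨
    (M.trace = (-1 - ρ) / 2 ∧
      M.charpoly = (X - 1) * (X + 1) * (X ^ 2 + C ((1 + ρ) / 2) * X + C ρ)) := by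
  have hu : u = ρ ∨ u = -ρ := by
    obtain ⟨i, j, hij⟩ := hent
    fin_cases i <;> fin_cases j <;>
      simp only [Fin.zero_eta, Fin.mk_one, Fin.reduceFinMk, e00, e01, e02, e03, e10, e11, e12, e13, e20, e21, e22, e23, e30, e31, e32, e33] at hij <;>
      first
        | exact absurd (show ρ.im = 0 from by
            rw [show ρ = 1 from by linear_combination -2*hij]; norm_num) hρ
        | exact absurd (show ρ.im = 0 from by
            rw [show ρ = -1 from by linear_combination -2*hij]; norm_num) hρ
        | exact Or.inl (by linear_combination 2*hij)
        | exact Or.inr (by linear_combination -2*hij)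
  rcases hu with hu | hu <;> subst hu
  · refine Or.inl ⟨?_, ?_⟩
    · rw [my_trace, e00, e11, e22, e33]; ring
    · apply charpoly_formula
      intro r
      rw [e00, e01, e02, e03, e10, e11, e12, e13, e20, e21, e22, e23, e30, e31, e32, e33]
      simp only [eval_mul, eval_add, eval_sub, eval_pow, eval_X, eval_C, eval_one]
      ring
  · refine Or.inr ⟨?_, ?_⟩
    · rw [my_trace, e00, e11, e22, e33]; ring
    · apply charpoly_formula
      intro r
      rw [e00, e01, e02, e03, e10, e11, e12, e13, e20, e21, e22, e23, e30, e31, e32, e33]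
      simp only [eval_mul, eval_add, eval_sub, eval_pow, eval_X, eval_C, eval_one]
      ring

lemma leafC3 (M : Matrix (Fin 4) (Fin 4) ℂ) (u ρ : ℂ) (hρ : ρ.im ≠ 0)
    (hent : ∃ i j, M i j = ρ / 2)
    (e00 : M 0 0 = 1/2) (e01 : M 0 1 = 1/2) (e02 : M 0 2 = 1/2) (e03 : M 0 3 = 1/2)
    (e10 : M 1 0 = 1/2) (e11 : M 1 1 = -(1/2)) (e12 : M 1 2 = u/2) (e13 : M 1 3 = -(u/2))
    (e20 : M 2 0 = 1/2) (e21 : M 2 1 = 1/2) (e22 : M 2 2 = -(1/2)) (e23 : M 2 3 = -(1/2))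
    (e30 : M 3 0 = 1/2) (e31 : M 3 1 = -(1/2)) (e32 : M 3 2 = -(u/2)) (e33 : M 3 3 = u/2)
    :
    (M.trace = (-1 + ρ) / 2 ∧
      M.charpoly = (X - 1) * (X + 1) * (X ^ 2 + C ((1 - ρ) / 2) * X - C ρ)) ∨
    (M.trace = (-1 - ρ) / 2 ∧
      M.charpoly = (X - 1) * (X + 1) * (X ^ 2 + C ((1 + ρ) / 2) * X + C ρ)) := by
  have hu : u = ρ ∨ u = -ρ := by
    obtain ⟨i, j, hij⟩ := hent
    fin_cases i <;> fin_cases j <;>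
      simp only [Fin.zero_eta, Fin.mk_one, Fin.reduceFinMk, e00, e01, e02, e03, e10, e11, e12, e13, e20, e21, e22, e23, e30, e31, e32, e33] at hij <;>
      first
        | exact absurd (show ρ.im = 0 from by
            rw [show ρ = 1 from by linear_combination -2*hij]; norm_num) hρ
        | exact absurd (show ρ.im = 0 from by
            rw [show ρ = -1 from by linear_combination -2*hij]; norm_num) hρ
        | exact Or.inl (by linear_combination 2*hij)
        | exact Or.inr (by linear_combination -2*hij)
  rcases hu with hu | hu <;> subst hu
  · refine Or.inl ⟨?_, ?_⟩
    · rw [my_trace, e00, e11, e22, e33]; ring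
    · apply charpoly_formula
      intro r
      rw [e00, e01, e02, e03, e10, e11, e12, e13, e20, e21, e22, e23, e30, e31, e32, e33]
      simp only [eval_mul, eval_add, eval_sub, eval_pow, eval_X, eval_C, eval_one]
      ring
  · refine Or.inr ⟨?_, ?_⟩
    · rw [my_trace, e00, e11, e22, e33]; ring
    · apply charpoly_formula
      intro r
      rw [e00, e01, e02, e03, e10, e11, e12, e13, e20, e21, e22, e23, e30, e31, e32, e33]
      simp only [eval_mul, eval_add, eval_sub, eval_pow, eval_X, eval_C, eval_one]
      ring

lemma leafC4 (M : Matrix (Fin 4) (Fin 4) ℂ) (u ρ : ℂ) (hρ : ρ.im ≠ 0)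
    (hent : ∃ i j, M i j = ρ / 2)
    (e00 : M 0 0 = 1/2) (e01 : M 0 1 = 1/2) (e02 : M 0 2 = 1/2) (e03 : M 0 3 = 1/2)
    (e10 : M 1 0 = 1/2) (e11 : M 1 1 = -(1/2)) (e12 : M 1 2 = -(1/2)) (e13 : M 1 3 = 1/2)
    (e20 : M 2 0 = 1/2) (e21 : M 2 1 = u/2) (e22 : M 2 2 = -(u/2)) (e23 : M 2 3 = -(1/2))
    (e30 : M 3 0 = 1/2) (e31 : M 3 1 = -(u/2)) (e32 : M 3 2 = u/2) (e33 : M 3 3 = -(1/2))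
    :
    (M.trace = (-1 + ρ) / 2 ∧
      M.charpoly = (X - 1) * (X + 1) * (X ^ 2 + C ((1 - ρ) / 2) * X - C ρ)) ∨
    (M.trace = (-1 - ρ) / 2 ∧
      M.charpoly = (X - 1) * (X + 1) * (X ^ 2 + C ((1 + ρ) / 2) * X + C ρ)) := by
  have hu : u = ρ ∨ u = -ρ := by
    obtain ⟨i, j, hij⟩ := hent
    fin_cases i <;> fin_cases j <;>
      simp only [Fin.zero_eta, Fin.mk_one, Fin.reduceFinMk, e00, e01, e02, e03, e10, e11, e12, e13, e20, e21, e22, e23, e30, e31, e32, e33] at hij <;>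
      first
        | exact absurd (show ρ.im = 0 from by
            rw [show ρ = 1 from by linear_combination -2*hij]; norm_num) hρ
        | exact absurd (show ρ.im = 0 from by
            rw [show ρ = -1 from by linear_combination -2*hij]; norm_num) hρ
        | exact Or.inl (by linear_combination 2*hij)
        | exact Or.inr (by linear_combination -2*hij)
  rcases hu with hu | hu <;> subst hu
  · refine Or.inr ⟨?_, ?_⟩
    · rw [my_trace, e00, e11, e22, e33]; ring
    · apply charpoly_formula
      intro r
      rw [e00, e01, e02, e03, e10, e11, e12, e13, e20, e21, e22, e23, e30, e31, e32, e33]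
      simp only [eval_mul, eval_add, eval_sub, eval_pow, eval_X, eval_C, eval_one]
      ring
  · refine Or.inl ⟨?_, ?_⟩
    · rw [my_trace, e00, e11, e22, e33]; ring
    · apply charpoly_formula
      intro r
      rw [e00, e01, e02, e03, e10, e11, e12, e13, e20, e21, e22, e23, e30, e31, e32, e33]
      simp only [eval_mul, eval_add, eval_sub, eval_pow, eval_X, eval_C, eval_one]
      ring

lemma leafC7 (M : Matrix (Fin 4) (Fin 4) ℂ) (u ρ : ℂ) (hρ : ρ.im ≠ 0)
    (hent : ∃ i j, M i j = ρ / 2)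
    (e00 : M 0 0 = 1/2) (e01 : M 0 1 = 1/2) (e02 : M 0 2 = 1/2) (e03 : M 0 3 = 1/2)
    (e10 : M 1 0 = 1/2) (e11 : M 1 1 = u/2) (e12 : M 1 2 = -(1/2)) (e13 : M 1 3 = -(u/2))
    (e20 : M 2 0 = 1/2) (e21 : M 2 1 = -(u/2)) (e22 : M 2 2 = -(1/2)) (e23 : M 2 3 = u/2)
    (e30 : M 3 0 = 1/2) (e31 : M 3 1 = -(1/2)) (e32 : M 3 2 = 1/2) (e33 : M 3 3 = -(1/2))
    :
    (M.trace = (-1 + ρ) / 2 ∧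
      M.charpoly = (X - 1) * (X + 1) * (X ^ 2 + C ((1 - ρ) / 2) * X - C ρ)) ∨
    (M.trace = (-1 - ρ) / 2 ∧
      M.charpoly = (X - 1) * (X + 1) * (X ^ 2 + C ((1 + ρ) / 2) * X + C ρ)) := by
  have hu : u = ρ ∨ u = -ρ := by
    obtain ⟨i, j, hij⟩ := hent
    fin_cases i <;> fin_cases j <;>
      simp only [Fin.zero_eta, Fin.mk_one, Fin.reduceFinMk, e00, e01, e02, e03, e10, e11, e12, e13, e20, e21, e22, e23, e30, e31, e32, e33] at hij <;>
      first
        | exact absurd (show ρ.im = 0 from by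
            rw [show ρ = 1 from by linear_combination -2*hij]; norm_num) hρ
        | exact absurd (show ρ.im = 0 from by
            rw [show ρ = -1 from by linear_combination -2*hij]; norm_num) hρ
        | exact Or.inl (by linear_combination 2*hij)
        | exact Or.inr (by linear_combination -2*hij)
  rcases hu with hu | hu <;> subst hu
  · refine Or.inl ⟨?_, ?_⟩
    · rw [my_trace, e00, e11, e22, e33]; ring
    · apply charpoly_formula
      intro r
      rw [e00, e01, e02, e03, e10, e11, e12, e13, e20, e21, e22, e23, e30, e31, e32, e33]
      simp only [eval_mul, eval_add, eval_sub, eval_pow, eval_X, eval_C, eval_one]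
      ring
  · refine Or.inr ⟨?_, ?_⟩
    · rw [my_trace, e00, e11, e22, e33]; ring
    · apply charpoly_formula
      intro r
      rw [e00, e01, e02, e03, e10, e11, e12, e13, e20, e21, e22, e23, e30, e31, e32, e33]
      simp only [eval_mul, eval_add, eval_sub, eval_pow, eval_X, eval_C, eval_one]
      ring

lemma leafC8 (M : Matrix (Fin 4) (Fin 4) ℂ) (u ρ : ℂ) (hρ : ρ.im ≠ 0)
    (hent : ∃ i j, M i j = ρ / 2)
    (e00 : M 0 0 = 1/2) (e01 : M 0 1 = 1/2) (e02 : M 0 2 = 1/2) (e03 : M 0 3 = 1/2)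
    (e10 : M 1 0 = 1/2) (e11 : M 1 1 = u/2) (e12 : M 1 2 = -(u/2)) (e13 : M 1 3 = -(1/2))
    (e20 : M 2 0 = 1/2) (e21 : M 2 1 = -(1/2)) (e22 : M 2 2 = -(1/2)) (e23 : M 2 3 = 1/2)
    (e30 : M 3 0 = 1/2) (e31 : M 3 1 = -(u/2)) (e32 : M 3 2 = u/2) (e33 : M 3 3 = -(1/2))
    :
    (M.trace = (-1 + ρ) / 2 ∧
      M.charpoly = (X - 1) * (X + 1) * (X ^ 2 + C ((1 - ρ) / 2) * X - C ρ)) ∨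
    (M.trace = (-1 - ρ) / 2 ∧
      M.charpoly = (X - 1) * (X + 1) * (X ^ 2 + C ((1 + ρ) / 2) * X + C ρ)) := by
  have hu : u = ρ ∨ u = -ρ := by
    obtain ⟨i, j, hij⟩ := hent
    fin_cases i <;> fin_cases j <;>
      simp only [Fin.zero_eta, Fin.mk_one, Fin.reduceFinMk, e00, e01, e02, e03, e10, e11, e12, e13, e20, e21, e22, e23, e30, e31, e32, e33] at hij <;>
      first
        | exact absurd (show ρ.im = 0 from by
            rw [show ρ = 1 from by linear_combination -2*hij]; norm_num) hρ
        | exact absurd (show ρ.im = 0 from by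
            rw [show ρ = -1 from by linear_combination -2*hij]; norm_num) hρ
        | exact Or.inl (by linear_combination 2*hij)
        | exact Or.inr (by linear_combination -2*hij)
  rcases hu with hu | hu <;> subst hu
  · refine Or.inl ⟨?_, ?_⟩
    · rw [my_trace, e00, e11, e22, e33]; ring
    · apply charpoly_formula
      intro r
      rw [e00, e01, e02, e03, e10, e11, e12, e13, e20, e21, e22, e23, e30, e31, e32, e33]
      simp only [eval_mul, eval_add, eval_sub, eval_pow, eval_X, eval_C, eval_one]
      ring
  · refine Or.inr ⟨?_, ?_⟩
    · rw [my_trace, e00, e11, e22, e33]; ring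
    · apply charpoly_formula
      intro r
      rw [e00, e01, e02, e03, e10, e11, e12, e13, e20, e21, e22, e23, e30, e31, e32, e33]
      simp only [eval_mul, eval_add, eval_sub, eval_pow, eval_X, eval_C, eval_one]
      ring

theorem nonsymmetric_hadamard_charpoly
    (H : Matrix (Fin 4) (Fin 4) ℂ)
    (hH : _root_.IsHadamard H) (hd : IsDephased H) (hnonsym : H ≠ Hᵀ)
    (ρ : ℂ) (hρ : ρ.im ≠ 0) (habs : ‖ρ‖ = 1)
    (hentry : ∃ i j, H i j = ρ / 2) :
    (H.trace = (-1 + ρ) / 2 ∧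
      H.charpoly = (X - 1) * (X + 1) * (X ^ 2 + C ((1 - ρ) / 2) * X - C ρ)) ∨
    (H.trace = (-1 - ρ) / 2 ∧
      H.charpoly = (X - 1) * (X + 1) * (X ^ 2 + C ((1 + ρ) / 2) * X + C ρ)) := by
  obtain ⟨hU, hU', hmod⟩ := hH
  have hs4 : Real.sqrt 4 = 2 := by
    rw [show (4:ℝ) = 2^2 by norm_num, Real.sqrt_sq]; norm_num
  have hrow : ∀ j, H 0 j = 1/2 := by
    intro j; rw [hd.1 j, hs4]; norm_num
  have hcol : ∀ i, H i 0 = 1/2 := by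
    intro i; rw [hd.2 i, hs4]; norm_num
  have chalf : (starRingEnd ℂ) ((1:ℂ)/2) = 1/2 := by
    rw [map_div₀, _root_.map_one, map_ofNat]
  have hsq : ∀ i j, (2 * H i j) * (2 * (starRingEnd ℂ) (H i j)) = 1 := by
    intro i j
    have h1 := Complex.mul_conj (H i j)
    have h2 : (Complex.normSq (H i j) : ℂ) = 1/4 := by
      rw [Complex.normSq_eq_norm_sq, hmod i j, hs4]; norm_num
    linear_combination 4*h1 + 4*h2
  have er10 : H 1 0 * (starRingEnd ℂ) (H 0 0) + H 1 1 * (starRingEnd ℂ) (H 0 1) +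
      H 1 2 * (starRingEnd ℂ) (H 0 2) + H 1 3 * (starRingEnd ℂ) (H 0 3) = 0 := by
    have hx := congrFun (congrFun hU 1) 0
    rw [Matrix.mul_apply, Fin.sum_univ_four] at hx
    simp only [Matrix.conjTranspose_apply, Complex.star_def] at hx
    rw [Matrix.one_apply_ne (show (1:Fin 4) ≠ 0 by decide)] at hx
    exact hx
  simp only [hrow, hcol, chalf] at er10
  have r1 : 1 + 2*H 1 1 + 2*H 1 2 + 2*H 1 3 = 0 := by linear_combination 4*er10
  have er20 : H 2 0 * (starRingEnd ℂ) (H 0 0) + H 2 1 * (starRingEnd ℂ) (H 0 1) +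
      H 2 2 * (starRingEnd ℂ) (H 0 2) + H 2 3 * (starRingEnd ℂ) (H 0 3) = 0 := by
    have hx := congrFun (congrFun hU 2) 0
    rw [Matrix.mul_apply, Fin.sum_univ_four] at hx
    simp only [Matrix.conjTranspose_apply, Complex.star_def] at hx
    rw [Matrix.one_apply_ne (show (2:Fin 4) ≠ 0 by decide)] at hx
    exact hx
  simp only [hrow, hcol, chalf] at er20
  have r2 : 1 + 2*H 2 1 + 2*H 2 2 + 2*H 2 3 = 0 := by linear_combination 4*er20
  have er30 : H 3 0 * (starRingEnd ℂ) (H 0 0) + H 3 1 * (starRingEnd ℂ) (H 0 1) +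
      H 3 2 * (starRingEnd ℂ) (H 0 2) + H 3 3 * (starRingEnd ℂ) (H 0 3) = 0 := by
    have hx := congrFun (congrFun hU 3) 0
    rw [Matrix.mul_apply, Fin.sum_univ_four] at hx
    simp only [Matrix.conjTranspose_apply, Complex.star_def] at hx
    rw [Matrix.one_apply_ne (show (3:Fin 4) ≠ 0 by decide)] at hx
    exact hx
  simp only [hrow, hcol, chalf] at er30
  have r3 : 1 + 2*H 3 1 + 2*H 3 2 + 2*H 3 3 = 0 := by linear_combination 4*er30
  have ec10 : (starRingEnd ℂ) (H 0 0) * H 0 1 + (starRingEnd ℂ) (H 1 0) * H 1 1 +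
      (starRingEnd ℂ) (H 2 0) * H 2 1 + (starRingEnd ℂ) (H 3 0) * H 3 1 = 0 := by
    have hx := congrFun (congrFun hU' 0) 1
    rw [Matrix.mul_apply, Fin.sum_univ_four] at hx
    simp only [Matrix.conjTranspose_apply, Complex.star_def] at hx
    rw [Matrix.one_apply_ne (show (0:Fin 4) ≠ 1 by decide)] at hx
    exact hx
  simp only [hrow, hcol, chalf] at ec10
  have c1 : 1 + 2*H 1 1 + 2*H 2 1 + 2*H 3 1 = 0 := by linear_combination 4*ec10
  have ec20 : (starRingEnd ℂ) (H 0 0) * H 0 2 + (starRingEnd ℂ) (H 1 0) * H 1 2 +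
      (starRingEnd ℂ) (H 2 0) * H 2 2 + (starRingEnd ℂ) (H 3 0) * H 3 2 = 0 := by
    have hx := congrFun (congrFun hU' 0) 2
    rw [Matrix.mul_apply, Fin.sum_univ_four] at hx
    simp only [Matrix.conjTranspose_apply, Complex.star_def] at hx
    rw [Matrix.one_apply_ne (show (0:Fin 4) ≠ 2 by decide)] at hx
    exact hx
  simp only [hrow, hcol, chalf] at ec20
  have c2 : 1 + 2*H 1 2 + 2*H 2 2 + 2*H 3 2 = 0 := by linear_combination 4*ec20
  have ec30 : (starRingEnd ℂ) (H 0 0) * H 0 3 + (starRingEnd ℂ) (H 1 0) * H 1 3 +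
      (starRingEnd ℂ) (H 2 0) * H 2 3 + (starRingEnd ℂ) (H 3 0) * H 3 3 = 0 := by
    have hx := congrFun (congrFun hU' 0) 3
    rw [Matrix.mul_apply, Fin.sum_univ_four] at hx
    simp only [Matrix.conjTranspose_apply, Complex.star_def] at hx
    rw [Matrix.one_apply_ne (show (0:Fin 4) ≠ 3 by decide)] at hx
    exact hx
  simp only [hrow, hcol, chalf] at ec30
  have c3 : 1 + 2*H 1 3 + 2*H 2 3 + 2*H 3 3 = 0 := by linear_combination 4*ec30
  have eo0 : H 1 0 * (starRingEnd ℂ) (H 2 0) + H 1 1 * (starRingEnd ℂ) (H 2 1) +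
      H 1 2 * (starRingEnd ℂ) (H 2 2) + H 1 3 * (starRingEnd ℂ) (H 2 3) = 0 := by
    have hx := congrFun (congrFun hU 1) 2
    rw [Matrix.mul_apply, Fin.sum_univ_four] at hx
    simp only [Matrix.conjTranspose_apply, Complex.star_def] at hx
    rw [Matrix.one_apply_ne (show (1:Fin 4) ≠ 2 by decide)] at hx
    exact hx
  simp only [hrow, hcol, chalf] at eo0
  have o12 : 1 + (2*H 1 1)*(2*(starRingEnd ℂ) (H 2 1)) + (2*H 1 2)*(2*(starRingEnd ℂ) (H 2 2))
      + (2*H 1 3)*(2*(starRingEnd ℂ) (H 2 3)) = 0 := by linear_combination 4*eo0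
  have r1' : 1 + 2*(starRingEnd ℂ) (H 1 1) + 2*(starRingEnd ℂ) (H 1 2) + 2*(starRingEnd ℂ) (H 1 3) = 0 := by
    have hx := congrArg (starRingEnd ℂ) r1
    simp only [map_add, _root_.map_mul, _root_.map_one, _root_.map_zero, map_ofNat] at hx
    linear_combination hx
  have r2' : 1 + 2*(starRingEnd ℂ) (H 2 1) + 2*(starRingEnd ℂ) (H 2 2) + 2*(starRingEnd ℂ) (H 2 3) = 0 := by
    have hx := congrArg (starRingEnd ℂ) r2
    simp only [map_add, _root_.map_mul, _root_.map_one, _root_.map_zero, map_ofNat] at hx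
    linear_combination hx
  have r3' : 1 + 2*(starRingEnd ℂ) (H 3 1) + 2*(starRingEnd ℂ) (H 3 2) + 2*(starRingEnd ℂ) (H 3 3) = 0 := by
    have hx := congrArg (starRingEnd ℂ) r3
    simp only [map_add, _root_.map_mul, _root_.map_one, _root_.map_zero, map_ofNat] at hx
    linear_combination hx
  have c1' : 1 + 2*(starRingEnd ℂ) (H 1 1) + 2*(starRingEnd ℂ) (H 2 1) + 2*(starRingEnd ℂ) (H 3 1) = 0 := by
    have hx := congrArg (starRingEnd ℂ) c1
    simp only [map_add, _root_.map_mul, _root_.map_one, _root_.map_zero, map_ofNat] at hx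
    linear_combination hx
  have c2' : 1 + 2*(starRingEnd ℂ) (H 1 2) + 2*(starRingEnd ℂ) (H 2 2) + 2*(starRingEnd ℂ) (H 3 2) = 0 := by
    have hx := congrArg (starRingEnd ℂ) c2
    simp only [map_add, _root_.map_mul, _root_.map_one, _root_.map_zero, map_ofNat] at hx
    linear_combination hx
  have c3' : 1 + 2*(starRingEnd ℂ) (H 1 3) + 2*(starRingEnd ℂ) (H 2 3) + 2*(starRingEnd ℂ) (H 3 3) = 0 := by
    have hx := congrArg (starRingEnd ℂ) c3
    simp only [map_add, _root_.map_mul, _root_.map_one, _root_.map_zero, map_ofNat] at hx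
    linear_combination hx
  rcases core_classify (2*H 1 1) (2*H 1 2) (2*H 1 3) (2*H 2 1) (2*H 2 2) (2*H 2 3) (2*H 3 1) (2*H 3 2) (2*H 3 3) (2*(starRingEnd ℂ) (H 1 1)) (2*(starRingEnd ℂ) (H 1 2)) (2*(starRingEnd ℂ) (H 1 3)) (2*(starRingEnd ℂ) (H 2 1)) (2*(starRingEnd ℂ) (H 2 2)) (2*(starRingEnd ℂ) (H 2 3)) (2*(starRingEnd ℂ) (H 3 1)) (2*(starRingEnd ℂ) (H 3 2)) (2*(starRingEnd ℂ) (H 3 3))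
      (hsq 1 1) (hsq 1 2) (hsq 1 3) (hsq 2 1) (hsq 2 2) (hsq 2 3) (hsq 3 1) (hsq 3 2) (hsq 3 3)
      r1 r2 r3 c1 c2 c3 r1' r2' r3' c1' c2' c3' o12 with
    ⟨q1,q2,q3,q4,q5,q6,q7,q8⟩ | ⟨q1,q2,q3,q4,q5,q6,q7,q8⟩ | ⟨q1,q2,q3,q4,q5,q6,q7,q8⟩ |
    ⟨q1,q2,q3,q4,q5,q6,q7,q8⟩ | ⟨q1,q2,q3,q4,q5,q6,q7,q8⟩ | ⟨q1,q2,q3,q4,q5,q6,q7,q8⟩ |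
    ⟨q1,q2,q3,q4,q5,q6,q7,q8⟩ | ⟨q1,q2,q3,q4,q5,q6,q7,q8⟩ | ⟨q1,q2,q3,q4,q5,q6,q7,q8⟩ |
    ⟨q1,q2,q3,q4,q5,q6,q7,q8⟩
  · exact leafC1 H (2*H 1 2) ρ hρ hentry
      (hrow 0) (hrow 1) (hrow 2) (hrow 3) (hcol 1) (by linear_combination q1/2) (by ring) (by linear_combination q2/2)
      (hcol 2) (by linear_combination q3/2) (by linear_combination q4/2) (by linear_combination q5/2) (hcol 3) (by linear_combination q6/2) (by linear_combination q7/2) (by linear_combination q8/2)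
  · exact leafC2 H (2*H 2 1) ρ hρ hentry
      (hrow 0) (hrow 1) (hrow 2) (hrow 3) (hcol 1) (by linear_combination q1/2) (by linear_combination q2/2) (by linear_combination q3/2)
      (hcol 2) (by ring) (by linear_combination q4/2) (by linear_combination q5/2) (hcol 3) (by linear_combination q6/2) (by linear_combination q7/2) (by linear_combination q8/2)
  · exact leafC3 H (2*H 1 2) ρ hρ hentry
      (hrow 0) (hrow 1) (hrow 2) (hrow 3) (hcol 1) (by linear_combination q1/2) (by ring) (by linear_combination q2/2)
      (hcol 2) (by linear_combination q3/2) (by linear_combination q4/2) (by linear_combination q5/2) (hcol 3) (by linear_combination q6/2) (by linear_combination q7/2) (by linear_combination q8/2)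
  · exact leafC4 H (2*H 2 1) ρ hρ hentry
      (hrow 0) (hrow 1) (hrow 2) (hrow 3) (hcol 1) (by linear_combination q1/2) (by linear_combination q2/2) (by linear_combination q3/2)
      (hcol 2) (by ring) (by linear_combination q4/2) (by linear_combination q5/2) (hcol 3) (by linear_combination q6/2) (by linear_combination q7/2) (by linear_combination q8/2)
  · exact absurd (by
      ext i j
      fin_cases i <;> fin_cases j <;>
        simp only [Fin.zero_eta, Fin.mk_one, Fin.reduceFinMk, Matrix.transpose_apply]
      · linear_combination hrow 1 - hcol 1
      · linear_combination hrow 2 - hcol 2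
      · linear_combination hrow 3 - hcol 3
      · linear_combination hcol 1 - hrow 1
      · linear_combination q2/2 - q4/2
      · linear_combination q3/2 - q6/2
      · linear_combination hcol 2 - hrow 2
      · linear_combination q4/2 - q2/2
      · linear_combination q5/2 - q7/2
      · linear_combination hcol 3 - hrow 3
      · linear_combination q6/2 - q3/2
      · linear_combination q7/2 - q5/2
      ) hnonsym
  · exact absurd (by
      ext i j
      fin_cases i <;> fin_cases j <;>
        simp only [Fin.zero_eta, Fin.mk_one, Fin.reduceFinMk, Matrix.transpose_apply]
      · linear_combination hrow 1 - hcol 1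
      · linear_combination hrow 2 - hcol 2
      · linear_combination hrow 3 - hcol 3
      · linear_combination hcol 1 - hrow 1
      · linear_combination q1/2 - q3/2
      · linear_combination q2/2 - q6/2
      · linear_combination hcol 2 - hrow 2
      · linear_combination q3/2 - q1/2
      · linear_combination q5/2 - q7/2
      · linear_combination hcol 3 - hrow 3
      · linear_combination q6/2 - q2/2
      · linear_combination q7/2 - q5/2
      ) hnonsym
  · exact leafC7 H (2*H 1 1) ρ hρ hentry
      (hrow 0) (hrow 1) (hrow 2) (hrow 3) (hcol 1) (by ring) (by linear_combination q1/2) (by linear_combination q2/2)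
      (hcol 2) (by linear_combination q3/2) (by linear_combination q4/2) (by linear_combination q5/2) (hcol 3) (by linear_combination q6/2) (by linear_combination q7/2) (by linear_combination q8/2)
  · exact leafC8 H (2*H 1 1) ρ hρ hentry
      (hrow 0) (hrow 1) (hrow 2) (hrow 3) (hcol 1) (by ring) (by linear_combination q1/2) (by linear_combination q2/2)
      (hcol 2) (by linear_combination q3/2) (by linear_combination q4/2) (by linear_combination q5/2) (hcol 3) (by linear_combination q6/2) (by linear_combination q7/2) (by linear_combination q8/2)
  · exact absurd (by
      ext i j
      fin_cases i <;> fin_cases j <;>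
        simp only [Fin.zero_eta, Fin.mk_one, Fin.reduceFinMk, Matrix.transpose_apply]
      · linear_combination hrow 1 - hcol 1
      · linear_combination hrow 2 - hcol 2
      · linear_combination hrow 3 - hcol 3
      · linear_combination hcol 1 - hrow 1
      · linear_combination q2/2 - q4/2
      · linear_combination q3/2 - q6/2
      · linear_combination hcol 2 - hrow 2
      · linear_combination q4/2 - q2/2
      · linear_combination -(q7)/2
      · linear_combination hcol 3 - hrow 3
      · linear_combination q6/2 - q3/2
      · linear_combination q7/2
      ) hnonsym
  · exact absurd (by
      ext i j
      fin_cases i <;> fin_cases j <;>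
        simp only [Fin.zero_eta, Fin.mk_one, Fin.reduceFinMk, Matrix.transpose_apply]
      · linear_combination hrow 1 - hcol 1
      · linear_combination hrow 2 - hcol 2
      · linear_combination hrow 3 - hcol 3
      · linear_combination hcol 1 - hrow 1
      · linear_combination q1/2 - q3/2
      · linear_combination q2/2 - q6/2
      · linear_combination hcol 2 - hrow 2
      · linear_combination q3/2 - q1/2
      · linear_combination q5/2 - q7/2
      · linear_combination hcol 3 - hrow 3
      · linear_combination q6/2 - q2/2
      · linear_combination q7/2 - q5/2
      ) hnonsym
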